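/- Let κ be a regular uncountable cardinal and let S ⊆ κ be fat stationary. Consider the poset Q_S whose elements are closed bounded subsets c of κ with c ⊆ S, ordered by end-extension (d ≤ c iff c = d ∩ (sup(c) + 1), i.e., d end-extends c). Then Q_S is locally homogeneous: for any two conditions c and d in Q_S, there exist end-extensions c⁺ ≤ c and d⁺ ≤ d such that the cones {e ∈ Q_S | e ≤ c⁺} and {e ∈ Q_S | e ≤ d⁺} are order-isomorphic. -/

import Mathlib

open Set

/-- `C` is a closed unbounded (club) subset of the ordinal `κ`. -/
def ClubIn (C : Set Ordinal) (κ : Ordinal) : Prop :=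
  C ⊆ Set.Iio κ ∧
  (∀ θ < κ, ∃ α ∈ C, θ < α) ∧
  (∀ γ, γ < κ → γ ≠ 0 → (∀ θ < γ, ∃ α ∈ C, θ < α ∧ α < γ) → γ ∈ C)

/-- `S` is stationary in `κ`: it meets every club subset of `κ`. -/
def StatIn (S : Set Ordinal) (κ : Ordinal) : Prop :=
  ∀ C, ClubIn C κ → (S ∩ C).Nonempty
/-- `X` is a closed copy of `β + 1` inside `Y`: a subset of `Y` of
order type `β + 1` (witnessed by a strictly monotone enumeration indexed by
`Set.Iic β`) containing all of its (nonzero) limit points. -/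
def ClosedCopy (β : Ordinal) (X Y : Set Ordinal) : Prop :=
  X ⊆ Y ∧ (∃ f : Ordinal → Ordinal, StrictMonoOn f (Set.Iic β) ∧ f '' Set.Iic β = X) ∧
  (∀ γ, γ ≠ 0 → (∀ θ < γ, ∃ α ∈ X, θ < α ∧ α < γ) → γ ∈ X)

/-- `S` is fat stationary in `κ`: every club subset of `κ` contains closed
copies of `β + 1` inside its intersection with `S`, for every `β < κ`. -/
def FatStatIn (S : Set Ordinal) (κ : Ordinal) : Prop :=
  S ⊆ Set.Iio κ ∧ ∀ C, ClubIn C κ → ∀ β < κ, ∃ X, ClosedCopy β X (S ∩ C)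
/-- `c` is a condition of the club-shooting forcing: a closed bounded subset of `S` (below `κ`). -/
def ClosedBddIn (c : Set Ordinal) (S : Set Ordinal) (κ : Ordinal) : Prop :=
  c ⊆ S ∧ (∃ θ < κ, ∀ α ∈ c, α < θ) ∧
  (∀ γ, γ ≠ 0 → (∀ θ < γ, ∃ α ∈ c, θ < α ∧ α < γ) → γ ∈ c)

/-- `d` end-extends `c`: `d ⊇ c` and all new points are above all points of `c`. -/
def EndExt (d c : Set Ordinal) : Prop :=
  c ⊆ d ∧ ∀ α ∈ d, α ∉ c → ∀ β ∈ c, β < α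

lemma aux_insert {S : Set Ordinal} {κ : Ordinal} {b : Set Ordinal} {γ : Ordinal}
    (hb : ClosedBddIn b S κ) (hγS : γ ∈ S) (hγκ : γ + 1 < κ)
    (hlt : ∀ α ∈ b, α < γ) :
    ClosedBddIn (insert γ b) S κ ∧ EndExt (insert γ b) b := by
  constructor
  · refine ⟨?_, ⟨γ + 1, hγκ, ?_⟩, ?_⟩
    · intro α hα
      rcases mem_insert_iff.1 hα with rfl | h
      · exact hγS
      · exact hb.1 h
    · intro α hα
      rcases mem_insert_iff.1 hα with rfl | h
      · exact lt_add_one _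
      · exact (hlt α h).trans (lt_add_one γ)
    · intro δ hδ0 hcof
      rcases lt_trichotomy δ γ with h | rfl | h
      · refine Or.inr (hb.2.2 δ hδ0 ?_)
        intro θ hθ
        obtain ⟨α, hα, hθα, hαδ⟩ := hcof θ hθ
        rcases mem_insert_iff.1 hα with rfl | hα
        · exact absurd (hαδ.trans h) (lt_irrefl _)
        · exact ⟨α, hα, hθα, hαδ⟩
      · exact mem_insert _ _
      · obtain ⟨α, hα, hθα, hαδ⟩ := hcof γ h
        rcases mem_insert_iff.1 hα with rfl | hα
        · exact absurd hθα (lt_irrefl _)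
        · exact absurd hθα (not_lt.2 (hlt α hα).le)
  · refine ⟨subset_insert _ _, fun α hα hαb β hβ => ?_⟩
    rcases mem_insert_iff.1 hα with rfl | h
    · exact hlt β hβ
    · exact absurd h hαb

lemma aux_inter {γ : Ordinal} {b t : Set Ordinal} (hble : ∀ α ∈ b, α ≤ γ) :
    (b ∪ (t ∩ Ioi γ)) ∩ Ioi γ = t ∩ Ioi γ := by
  ext α
  constructor
  · rintro ⟨hα | hα, hγα⟩
    · exact absurd (mem_Ioi.1 hγα) (not_lt.2 (hble α hα))
    · exact hα
  · exact fun h => ⟨Or.inr h, h.2⟩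

lemma aux_decomp {γ : Ordinal} {b e : Set Ordinal} (hγb : γ ∈ b)
    (hee : EndExt e b) :
    b ∪ (e ∩ Ioi γ) = e := by
  apply Subset.antisymm
  · exact union_subset hee.1 inter_subset_left
  · intro α hα
    by_cases h : α ∈ b
    · exact Or.inl h
    · exact Or.inr ⟨hα, hee.2 α hα h γ hγb⟩

lemma aux_transfer {S : Set Ordinal} {κ γ : Ordinal} {b e b₁ : Set Ordinal}
    (hb : ClosedBddIn b S κ) (hble : ∀ α ∈ b, α ≤ γ)
    (hγb₁ : γ ∈ b₁)
    (he : ClosedBddIn e S κ) (hee : EndExt e b₁) :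
    ClosedBddIn (b ∪ (e ∩ Ioi γ)) S κ ∧ EndExt (b ∪ (e ∩ Ioi γ)) b := by
  obtain ⟨θb, hθbκ, hθb⟩ := hb.2.1
  obtain ⟨θe, hθeκ, hθe⟩ := he.2.1
  constructor
  · refine ⟨?_, ⟨max θb θe, max_lt hθbκ hθeκ, ?_⟩, ?_⟩
    · rintro α (hα | hα)
      · exact hb.1 hα
      · exact he.1 hα.1
    · rintro α (hα | hα)
      · exact lt_max_of_lt_left (hθb α hα)
      · exact lt_max_of_lt_right (hθe α hα.1)
    · intro δ hδ0 hcof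
      rcases le_or_gt δ γ with h | h
      · refine Or.inl (hb.2.2 δ hδ0 ?_)
        intro θ hθ
        obtain ⟨α, hα, hθα, hαδ⟩ := hcof θ hθ
        rcases hα with hα | hα
        · exact ⟨α, hα, hθα, hαδ⟩
        · exact absurd (hαδ.trans_le h) (not_lt.2 (mem_Ioi.1 hα.2).le)
      · have hδe : δ ∈ e := by
          refine he.2.2 δ hδ0 ?_
          intro θ hθ
          rcases lt_or_ge θ γ with hθγ | hθγ
          · exact ⟨γ, hee.1 hγb₁, hθγ, h⟩
          · obtain ⟨α, hα, hθα, hαδ⟩ := hcof θ hθ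
            rcases hα with hα | hα
            · exact absurd (hble α hα) (not_le.2 (hθγ.trans_lt hθα))
            · exact ⟨α, hα.1, hθα, hαδ⟩
        exact Or.inr ⟨hδe, mem_Ioi.2 h⟩
  · refine ⟨subset_union_left, fun α hα hαb β hβ => ?_⟩
    rcases hα with hα | hα
    · exact absurd hα hαb
    · exact (hble β hβ).trans_lt (mem_Ioi.1 hα.2)

lemma aux_mono {γ : Ordinal} {b e₁ e₂ : Set Ordinal}
    (hble : ∀ α ∈ b, α ≤ γ) (h : EndExt e₁ e₂) :
    EndExt (b ∪ (e₁ ∩ Ioi γ)) (b ∪ (e₂ ∩ Ioi γ)) := by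
  constructor
  · exact union_subset_union_right _ (inter_subset_inter_left _ h.1)
  · intro α hα hαn β hβ
    rcases hα with hα | ⟨hαe, hαγ⟩
    · exact absurd (Or.inl hα) hαn
    · rcases hβ with hβ | ⟨hβe, hβγ⟩
      · exact (hble β hβ).trans_lt (mem_Ioi.1 hαγ)
      · have : α ∉ e₂ := fun hc => hαn (Or.inr ⟨hc, hαγ⟩)
        exact h.2 α hαe this β hβe

theorem club_shooting_locally_homogeneous (κ : Cardinal) (hreg : κ.IsRegular)
    (hunc : Cardinal.aleph0 < κ) (S : Set Ordinal) (hS : FatStatIn S κ.ord)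
    (c d : Set Ordinal) (hc : ClosedBddIn c S κ.ord) (hd : ClosedBddIn d S κ.ord) :
    ∃ c' d' : Set Ordinal, ClosedBddIn c' S κ.ord ∧ ClosedBddIn d' S κ.ord ∧
      EndExt c' c ∧ EndExt d' d ∧
      ∃ φ : {e : Set Ordinal // ClosedBddIn e S κ.ord ∧ EndExt e c'} ≃
            {e : Set Ordinal // ClosedBddIn e S κ.ord ∧ EndExt e d'},
        ∀ e₁ e₂, EndExt e₁.val e₂.val ↔ EndExt (φ e₁).val (φ e₂).val := by
  obtain ⟨θc, hθcκ, hθc⟩ := hc.2.1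
  obtain ⟨θd, hθdκ, hθd⟩ := hd.2.1
  have hκlim : Order.IsSuccLimit κ.ord := Cardinal.isSuccLimit_ord hunc.le
  have hsucc : ∀ a : Ordinal, a < κ.ord → a + 1 < κ.ord := by
    intro a ha
    have := hκlim.succ_lt ha
    rwa [Order.succ_eq_add_one] at this
  set θ := max θc θd with hθdef
  have hθκ : θ < κ.ord := max_lt hθcκ hθdκ
  have hclub : ClubIn (Ioo θ κ.ord) κ.ord := by
    refine ⟨fun α hα => hα.2, ?_, ?_⟩
    · intro η hη
      exact ⟨max η θ + 1, ⟨(le_max_right η θ).trans_lt (lt_add_one _),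
        hsucc _ (max_lt hη hθκ)⟩, (le_max_left η θ).trans_lt (lt_add_one _)⟩
    · intro δ hδκ hδ0 hcof
      obtain ⟨α, hα, _, hαδ⟩ := hcof 0 (pos_iff_ne_zero.2 hδ0)
      exact ⟨hα.1.trans hαδ, hδκ⟩
  obtain ⟨X, hXsub, ⟨f, hfmono, hfX⟩, -⟩ := hS.2 (Ioo θ κ.ord) hclub 0 hκlim.pos
  have hγX : f 0 ∈ X := hfX ▸ mem_image_of_mem f (mem_Iic.2 le_rfl)
  set γ := f 0 with hγdef
  have hγS : γ ∈ S := (hXsub hγX).1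
  have hγIoo : θ < γ ∧ γ < κ.ord := (hXsub hγX).2
  have hγ1 : γ + 1 < κ.ord := hsucc _ hγIoo.2
  have hltc : ∀ α ∈ c, α < γ := fun α hα =>
    ((hθc α hα).trans_le (le_max_left _ _)).trans hγIoo.1
  have hltd : ∀ α ∈ d, α < γ := fun α hα =>
    ((hθd α hα).trans_le (le_max_right _ _)).trans hγIoo.1
  obtain ⟨hc', hec⟩ := aux_insert hc hγS hγ1 hltc
  obtain ⟨hd', hed⟩ := aux_insert hd hγS hγ1 hltd
  have hγc' : γ ∈ insert γ c := mem_insert _ _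
  have hγd' : γ ∈ insert γ d := mem_insert _ _
  have hc'le : ∀ α ∈ insert γ c, α ≤ γ := by
    intro α hα
    rcases mem_insert_iff.1 hα with rfl | h
    · exact le_refl _
    · exact (hltc α h).le
  have hd'le : ∀ α ∈ insert γ d, α ≤ γ := by
    intro α hα
    rcases mem_insert_iff.1 hα with rfl | h
    · exact le_refl _
    · exact (hltd α h).le
  refine ⟨insert γ c, insert γ d, hc', hd', hec, hed, ?_⟩
  refine ⟨⟨fun e => ⟨insert γ d ∪ (e.1 ∩ Ioi γ), aux_transfer hd' hd'le hγc' e.2.1 e.2.2⟩,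
           fun e => ⟨insert γ c ∪ (e.1 ∩ Ioi γ), aux_transfer hc' hc'le hγd' e.2.1 e.2.2⟩,
           ?_, ?_⟩, ?_⟩
  · intro e
    apply Subtype.ext
    show insert γ c ∪ ((insert γ d ∪ (e.1 ∩ Ioi γ)) ∩ Ioi γ) = e.1
    rw [aux_inter hd'le, aux_decomp hγc' e.2.2]
  · intro e
    apply Subtype.ext
    show insert γ d ∪ ((insert γ c ∪ (e.1 ∩ Ioi γ)) ∩ Ioi γ) = e.1
    rw [aux_inter hc'le, aux_decomp hγd' e.2.2]
  · intro e₁ e₂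
    constructor
    · exact fun h => aux_mono hd'le h
    · intro h
      have h2 := aux_mono hc'le h
      simp only [Equiv.coe_fn_mk] at h2
      rwa [aux_inter hd'le, aux_inter hd'le, aux_decomp hγc' e₁.2.2,
        aux_decomp hγc' e₂.2.2] at h2
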